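/- In the twisted group algebra A(S_n), for 1 ≤ k ≤ n-1 and k ≤ p ≤ n, with β*_{n-k+1,p} := Σ_{k ≤ m ≤ p} t_{m,k}*, the identity β*_{n-k+1,p} · (id − t_{p,k}*) = (id − (t_k*)²·t_{p,k+1}*) · β*_{n-k+1,p-1} holds. -/

import Mathlib

open MvPolynomial

/-- The polynomial ring `R_n = ℂ[X_{ab} : 1 ≤ a,b ≤ n]` in `n²` commuting variables. -/
abbrev R (n : ℕ) : Type := MvPolynomial (Fin n × Fin n) ℂ

/-- The action of `S_n` on `R_n`: `g.X_{ab} = X_{g(a) g(b)}`. -/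
noncomputable def permAct {n : ℕ} (g : Equiv.Perm (Fin n)) (p : R n) : R n :=
  MvPolynomial.rename (fun ab => (g ab.1, g ab.2)) p

/-- The twisted group algebra `A(S_n) = R_n ⋊ ℂ[S_n]`, as formal `R_n`-linear
combinations of permutations. -/
abbrev A (n : ℕ) : Type := Equiv.Perm (Fin n) →₀ R n

/-- The identity element `id = 1·id` of `A(S_n)`. -/
noncomputable instance {n : ℕ} : One (A n) := ⟨Finsupp.single 1 1⟩

/-- The twisted multiplication `(p₁ g₁)·(p₂ g₂) = (p₁ · (g₁.p₂)) g₁g₂` on `A(S_n)`. -/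
noncomputable instance {n : ℕ} : Mul (A n) :=
  ⟨fun x y => x.sum fun g₁ p₁ => y.sum fun g₂ p₂ =>
    Finsupp.single (g₁ * g₂) (p₁ * permAct g₁ p₂)⟩

/-- The set of inversions `I(g) = {(a,b) : a < b, g(a) > g(b)}`. -/
def inversions {n : ℕ} (g : Equiv.Perm (Fin n)) : Finset (Fin n × Fin n) :=
  Finset.univ.filter fun ab => ab.1 < ab.2 ∧ g ab.2 < g ab.1

/-- The monomial `X_g = ∏_{(a,b) ∈ I(g⁻¹)} X_{ab}`. -/
noncomputable def Xg {n : ℕ} (g : Equiv.Perm (Fin n)) : R n :=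
  ∏ ab ∈ inversions g⁻¹, MvPolynomial.X ab

/-- The element `g* = X_g · g ∈ A(S_n)`. -/
noncomputable def gstar {n : ℕ} (g : Equiv.Perm (Fin n)) : A n :=
  Finsupp.single g (Xg g)

/-- The cycle `t_{k,j}` sending `m ↦ m+1` for `j ≤ m ≤ k-1` and `k ↦ j`,
fixing all points outside `[j,k]` (meaningful for `j ≤ k`). -/
def cyc {n : ℕ} [NeZero n] (k j : Fin n) : Equiv.Perm (Fin n) :=
  Equiv.permCongr (Equiv.addLeft j) (Fin.cycleRange (k - j))

lemma fin_sub_val {n : ℕ} (a b : Fin n) (h : (b:ℕ) ≤ a) : ((a - b : Fin n):ℕ) = a - b := by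
  rw [Fin.sub_def]
  have hb := b.isLt; have ha := a.isLt
  simp only []
  rw [show n - (b:ℕ) + a = (a - b) + n by omega, Nat.add_mod_right]
  exact Nat.mod_eq_of_lt (by omega)

lemma fin_sub_val_wrap {n : ℕ} (a b : Fin n) (h : (a:ℕ) < b) : ((a - b : Fin n):ℕ) = n + a - b := by
  rw [Fin.sub_def]
  have hb := b.isLt; have ha := a.isLt
  simp only []
  rw [Nat.mod_eq_of_lt (by omega)]; omega

lemma fin_add_one_val {n : ℕ} [NeZero n] (a : Fin n) (h : (a:ℕ) + 1 < n) : ((a + 1 : Fin n):ℕ) = a + 1 := by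
  have h1 : ((1:Fin n):ℕ) = 1 % n := Fin.val_one' n
  rw [Fin.add_def]
  simp only [h1]
  rw [Nat.mod_eq_of_lt (a := (1:ℕ)) (by omega), Nat.mod_eq_of_lt (by omega)]

/-- pointwise formula for `cyc` -/
lemma cyc_apply {n : ℕ} [NeZero n] (m j x : Fin n) (hjm : (j:ℕ) ≤ m) :
    cyc m j x = if (j:ℕ) ≤ x ∧ (x:ℕ) ≤ m then (if x = m then j else x + 1) else x := by
  obtain ⟨N, rfl⟩ : ∃ N, n = N + 1 := ⟨n - 1, by have := NeZero.pos n; omega⟩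
  have hm := m.isLt; have hj := j.isLt; have hx := x.isLt
  have key : (Equiv.addLeft j).symm x = x - j := by
    simp [Equiv.addLeft, sub_eq_neg_add]
  rw [cyc, Equiv.permCongr_apply, key]
  by_cases h1 : (j:ℕ) ≤ x ∧ (x:ℕ) ≤ m
  · rw [if_pos h1]
    by_cases h2 : x = m
    · subst h2
      rw [if_pos rfl, Fin.cycleRange_self]
      simp [Equiv.addLeft]
    · have hxm : (x:ℕ) < m := lt_of_le_of_ne h1.2 (fun h => h2 (Fin.ext h))
      rw [if_neg h2, Fin.cycleRange_of_lt (by rw [Fin.lt_def, fin_sub_val _ _ h1.1, fin_sub_val _ _ hjm]; omega)]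
      simp only [Equiv.coe_addLeft]
      rw [show j + (x - j + 1) = x + 1 by abel]
  · rw [if_neg h1]
    have : m - j < x - j := by
      rw [Fin.lt_def, fin_sub_val _ _ hjm]
      rcases Nat.lt_or_ge (x:ℕ) j with h | h
      · rw [fin_sub_val_wrap _ _ h]; omega
      · rw [fin_sub_val _ _ h]; omega
    rw [Fin.cycleRange_of_gt this]
    simp only [Equiv.coe_addLeft]
    rw [show j + (x - j) = x by abel]

lemma cyc_inv_apply {n : ℕ} [NeZero n] (m j x : Fin n) (hjm : (j:ℕ) ≤ m) :
    (cyc m j)⁻¹ x = if (j:ℕ) ≤ x ∧ (x:ℕ) ≤ m then (if x = j then m else x - 1) else x := by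
  have hm := m.isLt; have hj := j.isLt; have hx := x.isLt
  rw [Equiv.Perm.inv_def, Equiv.symm_apply_eq]
  by_cases h1 : (j:ℕ) ≤ x ∧ (x:ℕ) ≤ m
  · rw [if_pos h1]
    by_cases h2 : x = j
    · subst h2
      rw [if_pos rfl, cyc_apply _ _ _ hjm, if_pos ⟨hjm, le_refl _⟩, if_pos rfl]
    · have hjx : (j:ℕ) < x := lt_of_le_of_ne h1.1 (fun h => h2 (Fin.ext h.symm))
      have hone : ((1 : Fin n):ℕ) = 1 := by
        rw [Fin.val_one', Nat.mod_eq_of_lt (by omega)]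
      have hx1 : ((x - 1 : Fin n):ℕ) = (x:ℕ) - 1 := by
        rw [fin_sub_val x 1 (by rw [hone]; omega), hone]
      rw [if_neg h2, cyc_apply _ _ _ hjm, if_pos (by omega), if_neg (by
        intro h; rw [h] at hx1; omega), sub_add_cancel]
  · rw [if_neg h1, cyc_apply _ _ _ hjm, if_neg h1]

lemma cyc_val {n : ℕ} [NeZero n] (m j x : Fin n) (hjm : (j:ℕ) ≤ m) :
    ((cyc m j x : Fin n) : ℕ) =
      if (j:ℕ) ≤ x ∧ (x:ℕ) ≤ m then (if (x:ℕ) = (m:ℕ) then (j:ℕ) else (x:ℕ) + 1) else x := by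
  have hm := m.isLt; have hx := x.isLt
  rw [cyc_apply _ _ _ hjm]
  by_cases h1 : (j:ℕ) ≤ x ∧ (x:ℕ) ≤ m
  · rw [if_pos h1, if_pos h1]
    by_cases h2 : (x:ℕ) = (m:ℕ)
    · rw [if_pos (Fin.ext h2), if_pos h2]
    · rw [if_neg (fun h => h2 (congrArg Fin.val h)), if_neg h2,
        fin_add_one_val _ (by omega)]
  · rw [if_neg h1, if_neg h1]

lemma cyc_inv_val {n : ℕ} [NeZero n] (m j x : Fin n) (hjm : (j:ℕ) ≤ m) :
    (((cyc m j)⁻¹ x : Fin n) : ℕ) =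
      if (j:ℕ) ≤ x ∧ (x:ℕ) ≤ m then (if (x:ℕ) = (j:ℕ) then (m:ℕ) else (x:ℕ) - 1) else x := by
  have hm := m.isLt; have hx := x.isLt
  rw [cyc_inv_apply _ _ _ hjm]
  by_cases h1 : (j:ℕ) ≤ x ∧ (x:ℕ) ≤ m
  · rw [if_pos h1, if_pos h1]
    by_cases h2 : (x:ℕ) = (j:ℕ)
    · rw [if_pos (Fin.ext h2), if_pos h2]
    · have hone : ((1 : Fin n):ℕ) = 1 := by
        rw [Fin.val_one', Nat.mod_eq_of_lt (by omega)]
      rw [if_neg (fun h => h2 (congrArg Fin.val h)), if_neg h2,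
        fin_sub_val x 1 (by rw [hone]; omega), hone]
  · rw [if_neg h1, if_neg h1]

lemma inversions_cyc {n : ℕ} [NeZero n] (m j : Fin n) (hjm : (j:ℕ) ≤ m) :
    inversions (cyc m j)⁻¹ = (Finset.Ioc j m).image (fun b => (j, b)) := by
  ext ⟨a, b⟩
  have ha := a.isLt; have hb := b.isLt; have hm := m.isLt
  simp only [inversions, Finset.mem_filter, Finset.mem_univ, true_and, Finset.mem_image,
    Finset.mem_Ioc, Prod.mk.injEq, Fin.lt_def, Fin.le_def]
  rw [cyc_inv_val _ _ _ hjm, cyc_inv_val _ _ _ hjm]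
  constructor
  · rintro ⟨hab, hlt⟩
    have key : (j:ℕ) = (a:ℕ) ∧ (j:ℕ) < (b:ℕ) ∧ (b:ℕ) ≤ (m:ℕ) := by
      split_ifs at hlt <;> omega
    exact ⟨b, ⟨key.2.1, key.2.2⟩, Fin.ext key.1, rfl⟩
  · rintro ⟨x, ⟨h1, h2⟩, rfl, rfl⟩
    constructor
    · exact h1
    · split_ifs <;> omega

lemma Xg_cyc {n : ℕ} [NeZero n] (m j : Fin n) (hjm : (j:ℕ) ≤ m) :
    Xg (cyc m j) = ∏ b ∈ Finset.Ioc j m, MvPolynomial.X (j, b) := by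
  rw [Xg, inversions_cyc _ _ hjm, Finset.prod_image]
  intro x _ y _ h
  exact (Prod.mk.injEq _ _ _ _ ▸ h).2

lemma cyc_self {n : ℕ} [NeZero n] (j : Fin n) : cyc j j = 1 := by
  refine Equiv.ext fun x => Fin.ext ?_
  rw [cyc_val _ _ _ (le_refl _)]
  split_ifs <;> simp <;> omega

lemma permAct_prod {n : ℕ} (g : Equiv.Perm (Fin n)) {ι : Type*} (s : Finset ι)
    (f : ι → Fin n × Fin n) :
    permAct g (∏ b ∈ s, MvPolynomial.X (f b)) = ∏ b ∈ s, MvPolynomial.X (g (f b).1, g (f b).2) := by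
  unfold permAct
  rw [map_prod]
  exact Finset.prod_congr rfl fun b _ => MvPolynomial.rename_X _ _

lemma permAct_one {n : ℕ} (p : R n) : permAct 1 p = p := by
  unfold permAct
  have : (fun ab : Fin n × Fin n => ((1 : Equiv.Perm (Fin n)) ab.1, (1 : Equiv.Perm (Fin n)) ab.2)) = id := by
    funext ab; simp
  rw [this, MvPolynomial.rename_id, AlgHom.id_apply]

lemma Xg_one {n : ℕ} : Xg (1 : Equiv.Perm (Fin n)) = 1 := by
  have : inversions (1 : Equiv.Perm (Fin n))⁻¹ = ∅ := by
    ext ⟨a, b⟩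
    simp only [inversions, Finset.mem_filter, Finset.mem_univ, true_and, Finset.notMem_empty,
      iff_false, inv_one, Equiv.Perm.one_apply]
    rintro ⟨h1, h2⟩; exact absurd h2 (not_lt.2 h1.le)
  rw [Xg, this, Finset.prod_empty]

lemma A_mul_def {n : ℕ} (x y : A n) :
    x * y = x.sum fun g₁ p₁ => y.sum fun g₂ p₂ =>
      Finsupp.single (g₁ * g₂) (p₁ * permAct g₁ p₂) := rfl

lemma permAct_add {n : ℕ} (g : Equiv.Perm (Fin n)) (p q : R n) :
    permAct g (p + q) = permAct g p + permAct g q := map_add _ _ _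

lemma single_mul_single {n : ℕ} (g₁ g₂ : Equiv.Perm (Fin n)) (p₁ p₂ : R n) :
    (Finsupp.single g₁ p₁ * Finsupp.single g₂ p₂ : A n) =
      Finsupp.single (g₁ * g₂) (p₁ * permAct g₁ p₂) := by
  rw [A_mul_def, Finsupp.sum_single_index, Finsupp.sum_single_index]
  · rw [show permAct g₁ (0 : R n) = 0 from map_zero _, mul_zero, Finsupp.single_zero]
  · rw [Finsupp.sum_single_index] <;>
      simp [show permAct g₁ (0 : R n) = 0 from map_zero _]

/-- right multiplication as an additive hom -/
noncomputable def mulR {n : ℕ} (y : A n) : A n →+ A n :=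
  AddMonoidHom.mk' (fun x => x * y) (by
    intro x x'
    rw [A_mul_def, A_mul_def, A_mul_def]
    rw [Finsupp.sum_add_index']
    · intro g
      rw [Finsupp.sum]
      simp only [zero_mul, Finsupp.single_zero]
      exact Finset.sum_const_zero
    · intro g p p'
      rw [← Finsupp.sum_add]
      congr 1; funext g₂ p₂
      rw [add_mul, Finsupp.single_add])

/-- left multiplication as an additive hom -/
noncomputable def mulL {n : ℕ} (x : A n) : A n →+ A n :=
  AddMonoidHom.mk' (fun y => x * y) (by
    intro y y'
    rw [A_mul_def, A_mul_def, A_mul_def, ← Finsupp.sum_add]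
    congr 1; funext g p
    rw [Finsupp.sum_add_index']
    · intro g₂
      rw [show permAct g (0 : _root_.R n) = 0 from map_zero _, mul_zero, Finsupp.single_zero]
    · intro g₂ p₂ p₂'
      rw [show permAct g (p₂ + p₂') = permAct g p₂ + permAct g p₂' from map_add _ p₂ p₂', mul_add, Finsupp.single_add])

lemma mulR_apply {n : ℕ} (y x : A n) : mulR y x = x * y := rfl
lemma mulL_apply {n : ℕ} (x y : A n) : mulL x y = x * y := rfl

lemma perm_key {n : ℕ} [NeZero n] (k k1 m m1 p : Fin n)
    (hk1 : (k1:ℕ) = (k:ℕ) + 1) (hm1 : (m1:ℕ) = (m:ℕ) + 1)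
    (hkm : (k:ℕ) ≤ m) (hmp : (m:ℕ) + 1 ≤ p) :
    cyc m1 k * cyc p k = cyc p k1 * cyc m k := by
  have hp := p.isLt
  refine Equiv.ext fun x => Fin.ext ?_
  rw [Equiv.Perm.mul_apply, Equiv.Perm.mul_apply,
    cyc_val m1 k _ (by omega), cyc_val p k x (by omega),
    cyc_val p k1 _ (by omega), cyc_val m k x (by omega)]
  have hx := x.isLt
  split_ifs <;> omega

lemma permAct_prod' {n : ℕ} (g : Equiv.Perm (Fin n)) (s : Finset (Fin n)) (c : Fin n) :
    permAct g (∏ b ∈ s, MvPolynomial.X (c, b)) = ∏ b ∈ s, MvPolynomial.X (g c, g b) := by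
  unfold permAct
  rw [map_prod]
  exact Finset.prod_congr rfl fun b _ => MvPolynomial.rename_X _ _

lemma prod_act_I {n : ℕ} [NeZero n] (j m : Fin n) (hjm : (j:ℕ) ≤ m)
    (s t : Finset (Fin n)) (hst : s.image (cyc m j) = t) (c : Fin n) :
    ∏ b ∈ s, MvPolynomial.X (c, cyc m j b) = ∏ b ∈ t, (MvPolynomial.X (c, b) : R n) := by
  rw [← hst, Finset.prod_image (fun x _ y _ h => (cyc m j).injective h)]

lemma poly_key {n : ℕ} [NeZero n] (k k1 m m1 p : Fin n)
    (hk1 : (k1:ℕ) = (k:ℕ) + 1) (hm1 : (m1:ℕ) = (m:ℕ) + 1)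
    (hkm : (k:ℕ) ≤ m) (hmp : (m:ℕ) + 1 ≤ p) :
    Xg (cyc m1 k) * permAct (cyc m1 k) (Xg (cyc p k)) =
      MvPolynomial.X (k, k1) * MvPolynomial.X (k1, k) *
        (Xg (cyc p k1) * permAct (cyc p k1) (Xg (cyc m k))) := by
  have hp := p.isLt
  rw [Xg_cyc m1 k (by omega), Xg_cyc p k (by omega), Xg_cyc p k1 (by omega),
    Xg_cyc m k (by omega), permAct_prod' (cyc m1 k) (Finset.Ioc k p) k,
    permAct_prod' (cyc p k1) (Finset.Ioc k m) k]
  -- fixed points of the two cycles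
  have e1 : cyc m1 k k = k1 := by
    refine Fin.ext ?_
    rw [cyc_val _ _ _ (by omega)]
    split_ifs <;> omega
  have e2 : cyc p k1 k = k := by
    refine Fin.ext ?_
    rw [cyc_val _ _ _ (by omega)]
    split_ifs <;> omega
  rw [e1, e2]
  -- image computations
  have himg1 : (Finset.Ioc k p).image (cyc m1 k) = insert k (Finset.Ioc k1 p) := by
    ext c
    have hc := c.isLt
    simp only [Finset.mem_image, Finset.mem_Ioc, Finset.mem_insert, Fin.lt_def, Fin.le_def,
      Fin.ext_iff]
    constructor
    · rintro ⟨b, hb, hbc⟩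
      have hbv := b.isLt
      rw [cyc_val _ _ _ (by omega)] at hbc
      split_ifs at hbc <;> omega
    · intro hc2
      refine ⟨(cyc m1 k)⁻¹ c, ?_, congrArg Fin.val (Equiv.apply_symm_apply _ _)⟩
      rw [cyc_inv_val _ _ _ (by omega)]
      split_ifs <;> omega
  have himg2 : (Finset.Ioc k m).image (cyc p k1) = Finset.Ioc k1 m1 := by
    ext c
    have hc := c.isLt
    simp only [Finset.mem_image, Finset.mem_Ioc, Fin.lt_def, Fin.le_def, Fin.ext_iff]
    constructor
    · rintro ⟨b, hb, hbc⟩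
      have hbv := b.isLt
      rw [cyc_val _ _ _ (by omega)] at hbc
      split_ifs at hbc <;> omega
    · intro hc2
      refine ⟨(cyc p k1)⁻¹ c, ?_, congrArg Fin.val (Equiv.apply_symm_apply _ _)⟩
      rw [cyc_inv_val _ _ _ (by omega)]
      split_ifs <;> omega
  rw [prod_act_I k m1 (by omega) _ _ himg1 k1, prod_act_I k1 p (by omega) _ _ himg2 k]
  -- split off the extremal elements
  have hsplit1 : Finset.Ioc k m1 = insert k1 (Finset.Ioc k1 m1) := by
    ext c
    simp only [Finset.mem_Ioc, Finset.mem_insert, Fin.lt_def, Fin.le_def, Fin.ext_iff]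
    omega
  have hnot1 : k1 ∉ Finset.Ioc k1 m1 := by
    simp only [Finset.mem_Ioc, Fin.lt_def]
    omega
  have hnot2 : k ∉ Finset.Ioc k1 p := by
    simp only [Finset.mem_Ioc, Fin.lt_def]
    omega
  rw [hsplit1, Finset.prod_insert hnot1, Finset.prod_insert hnot2]
  ring

lemma A_mul_sub {n : ℕ} (x y z : A n) : x * (y - z) = x * y - x * z := map_sub (mulL x) y z
lemma A_sub_mul {n : ℕ} (x y z : A n) : (x - y) * z = x * z - y * z := map_sub (mulR z) x y
lemma A_mul_sum {n : ℕ} {ι : Type*} (x : A n) (s : Finset ι) (f : ι → A n) :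
    x * (∑ m ∈ s, f m) = ∑ m ∈ s, x * f m := map_sum (mulL x) f s
lemma A_sum_mul {n : ℕ} {ι : Type*} (s : Finset ι) (f : ι → A n) (y : A n) :
    (∑ m ∈ s, f m) * y = ∑ m ∈ s, f m * y := map_sum (mulR y) f s

lemma A_one_def {n : ℕ} : (1 : A n) = Finsupp.single 1 1 := rfl

lemma A_mul_one {n : ℕ} (x : A n) : x * 1 = x := by
  rw [A_mul_def, A_one_def]
  have : ∀ g : Equiv.Perm (Fin n), ∀ p : R n,
      ((Finsupp.single 1 1 : A n).sum fun g₂ p₂ =>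
        Finsupp.single (g * g₂) (p * permAct g p₂)) = Finsupp.single g p := by
    intro g p
    rw [Finsupp.sum_single_index (by
      rw [show permAct g (0 : R n) = 0 from map_zero _, mul_zero, Finsupp.single_zero]),
      show permAct g (1 : R n) = 1 from map_one _, mul_one, mul_one]
  calc x.sum (fun g p => (Finsupp.single 1 1 : A n).sum fun g₂ p₂ =>
        Finsupp.single (g * g₂) (p * permAct g p₂))
      = x.sum Finsupp.single := by
        congr 1; funext g p; exact this g p
    _ = x := Finsupp.sum_single x

lemma A_one_mul {n : ℕ} (x : A n) : 1 * x = x := by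
  rw [A_mul_def, A_one_def]
  rw [Finsupp.sum_single_index (by
    simp only [zero_mul, Finsupp.single_zero]
    exact Finset.sum_const_zero)]
  calc x.sum (fun g₂ p₂ => Finsupp.single (1 * g₂) ((1 : R n) * permAct 1 p₂))
      = x.sum Finsupp.single := by
        congr 1; funext g p
        rw [one_mul, one_mul, permAct_one]
    _ = x := Finsupp.sum_single x

lemma gstar_one {n : ℕ} : gstar (1 : Equiv.Perm (Fin n)) = 1 := by
  rw [gstar, Xg_one, A_one_def]


/-- for `1 ≤ k < p ≤ nset_option maxHeartbeats 1000000 in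
`, with `β*_{n-k+1,p} = Σ_{k ≤ m ≤ p} t_{m,k}*`,
`β*_{n-k+1,p}·(id − t_{p,k}*) = (id − (t_k*)²·t_{p,k+1}*)·β*_{n-k+1,p-1}`. -/
theorem beta_recursion {n : ℕ} [NeZero n] (k k1 p p1 : Fin n)
    (hk1 : (k1 : ℕ) = (k : ℕ) + 1) (hp1 : (p1 : ℕ) + 1 = (p : ℕ)) (hkp : k < p) :
    (∑ m ∈ Finset.univ.filter (fun m : Fin n => k ≤ m ∧ m ≤ p), gstar (cyc m k)) *
        ((1 : A n) - gstar (cyc p k)) =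
      ((1 : A n) -
          ((MvPolynomial.X (k, k1) * MvPolynomial.X (k1, k) : R n) • (1 : A n)) *
            gstar (cyc p k1)) *
        (∑ m ∈ Finset.univ.filter (fun m : Fin n => k ≤ m ∧ m ≤ p1), gstar (cyc m k)) := by
  have hp := p.isLt
  have hkp' : (k:ℕ) < (p:ℕ) := hkp
  -- the twist factor as a single
  have hQ : ((MvPolynomial.X (k, k1) * MvPolynomial.X (k1, k) : R n) • (1 : A n)) *
      gstar (cyc p k1) =
      Finsupp.single (cyc p k1)
        ((MvPolynomial.X (k, k1) * MvPolynomial.X (k1, k) : R n) * Xg (cyc p k1)) := by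
    rw [A_one_def, Finsupp.smul_single, smul_eq_mul, mul_one, gstar, single_mul_single,
      one_mul, permAct_one]
  rw [A_mul_sub, A_sub_mul, A_mul_one, A_one_mul, A_sum_mul, hQ, A_mul_sum]
  -- decompose the index sets
  have hSp_ins : Finset.univ.filter (fun m : Fin n => k ≤ m ∧ m ≤ p) =
      insert p (Finset.univ.filter (fun m : Fin n => k ≤ m ∧ m ≤ p1)) := by
    ext m
    have hm := m.isLt
    simp only [Finset.mem_filter, Finset.mem_univ, true_and, Finset.mem_insert,
      Fin.le_def, Fin.ext_iff]
    omega
  have hpSq : p ∉ Finset.univ.filter (fun m : Fin n => k ≤ m ∧ m ≤ p1) := by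
    simp only [Finset.mem_filter, Finset.mem_univ, true_and, Fin.le_def]
    omega
  have hSp_insk : Finset.univ.filter (fun m : Fin n => k ≤ m ∧ m ≤ p) =
      insert k (Finset.univ.filter (fun m : Fin n => k < m ∧ m ≤ p)) := by
    ext m
    have hm := m.isLt
    simp only [Finset.mem_filter, Finset.mem_univ, true_and, Finset.mem_insert,
      Fin.le_def, Fin.lt_def, Fin.ext_iff]
    omega
  have hkT : k ∉ Finset.univ.filter (fun m : Fin n => k < m ∧ m ≤ p) := by
    simp only [Finset.mem_filter, Finset.mem_univ, true_and, Fin.lt_def]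
    omega
  rw [show (∑ m ∈ Finset.univ.filter (fun m : Fin n => k ≤ m ∧ m ≤ p), gstar (cyc m k)) =
      gstar (cyc p k) + ∑ m ∈ Finset.univ.filter (fun m : Fin n => k ≤ m ∧ m ≤ p1),
        gstar (cyc m k) by rw [hSp_ins, Finset.sum_insert hpSq]]
  rw [show (∑ m ∈ Finset.univ.filter (fun m : Fin n => k ≤ m ∧ m ≤ p),
        gstar (cyc m k) * gstar (cyc p k)) =
      gstar (cyc p k) + ∑ m ∈ Finset.univ.filter (fun m : Fin n => k < m ∧ m ≤ p),
        gstar (cyc m k) * gstar (cyc p k) by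
    rw [hSp_insk, Finset.sum_insert hkT, cyc_self, gstar_one, A_one_mul]]
  -- the key bijection between the two remaining sums
  have key : (∑ m ∈ Finset.univ.filter (fun m : Fin n => k < m ∧ m ≤ p),
        gstar (cyc m k) * gstar (cyc p k)) =
      ∑ m ∈ Finset.univ.filter (fun m : Fin n => k ≤ m ∧ m ≤ p1),
        Finsupp.single (cyc p k1)
          ((MvPolynomial.X (k, k1) * MvPolynomial.X (k1, k) : R n) * Xg (cyc p k1)) *
          gstar (cyc m k) := by
    have hone : ((1 : Fin n) : ℕ) = 1 := by
      rw [Fin.val_one', Nat.mod_eq_of_lt (by omega)]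
    refine Finset.sum_nbij' (fun m => m - 1) (fun m => m + 1) ?_ ?_ ?_ ?_ ?_
    · intro a ha
      simp only [Finset.mem_filter, Finset.mem_univ, true_and, Fin.lt_def, Fin.le_def] at ha ⊢
      rw [fin_sub_val a 1 (by omega), hone]
      omega
    · intro a ha
      simp only [Finset.mem_filter, Finset.mem_univ, true_and, Fin.lt_def, Fin.le_def] at ha ⊢
      rw [fin_add_one_val a (by omega)]
      omega
    · intro a _; exact sub_add_cancel a 1
    · intro a _; exact add_sub_cancel_right a 1
    · intro a ha
      simp only [Finset.mem_filter, Finset.mem_univ, true_and, Fin.lt_def, Fin.le_def] at ha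
      -- a = m+1 with m = a - 1
      set m := a - 1 with hm
      have hmv : (m:ℕ) = (a:ℕ) - 1 := by rw [hm, fin_sub_val a 1 (by omega), hone]
      have ham : a = m + 1 := (sub_add_cancel a 1).symm
      have hm1v : ((m + 1 : Fin n):ℕ) = (m:ℕ) + 1 := fin_add_one_val m (by omega)
      rw [ham, gstar, gstar, gstar, single_mul_single, single_mul_single,
        perm_key k k1 m (m+1) p hk1 hm1v (by omega) (by omega),
        poly_key k k1 m (m+1) p hk1 hm1v (by omega) (by omega), mul_assoc]
      congr 1
      ring
  rw [key]
  abel
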